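/- Let R be a Noetherian commutative ring, I \subseteq R an ideal, and suppose R is I-adically complete. Then for any finitely generated R-modules M and N, the natural map Hom_R(M, N) \to \varprojlim_n Hom_{R/I^n}(M/I^n M, N/I^n N) is a bijection. -/

import Mathlib

open AdicCompletion

section Aux

variable {R : Type u} [CommRing R] (I : Ideal R)
variable (M : Type u) [AddCommGroup M] [Module R M]

/-- If `M` is precomplete, the map to the adic completion is surjective. -/
lemma aux_of_surjective_of_precomplete [IsPrecomplete I M] :
    Function.Surjective (AdicCompletion.of I M) := by
  intro x
  obtain ⟨f, rfl⟩ := AdicCompletion.mk_surjective I M x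
  obtain ⟨L, hL⟩ := IsPrecomplete.prec (inferInstanceAs (IsPrecomplete I M))
    (f := f) (fun {m n} hmn => f.property hmn)
  refine ⟨L, ?_⟩
  ext n
  simpa [AdicCompletion.of_apply, AdicCompletion.mk_apply_coe, SModEq.def] using
    ((hL n).symm : L ≡ f n [SMOD (I ^ n • ⊤ : Submodule R M)])

lemma aux_of_smul (r : R) (m : M) :
    AdicCompletion.of I R r • AdicCompletion.of I M m = AdicCompletion.of I M (r • m) := by
  ext n
  rw [AdicCompletion.smul_eval]
  simp only [AdicCompletion.of_apply, Submodule.mkQ_apply]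
  exact (AdicCompletion.mk_smul_mk (I := I ^ n) r m)

variable [IsNoetherianRing R] [IsAdicComplete I R] [Module.Finite R M]

lemma aux_of_surjective_finite : Function.Surjective (AdicCompletion.of I M) := by
  intro x
  obtain ⟨z, rfl⟩ := (AdicCompletion.ofTensorProduct_bijective_of_finite_of_isNoetherian
    I M).surjective x
  induction z using TensorProduct.induction_on with
  | zero => exact ⟨0, by simp⟩
  | tmul a m =>
      obtain ⟨r, rfl⟩ := aux_of_surjective_of_precomplete I R a
      refine ⟨r • m, ?_⟩
      rw [AdicCompletion.ofTensorProduct_tmul, ← aux_of_smul]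
  | add z w hz hw =>
      obtain ⟨y, hy⟩ := hz
      obtain ⟨y', hy'⟩ := hw
      exact ⟨y + y', by rw [map_add, hy, hy', map_add]⟩

lemma aux_isHausdorff_finite : IsHausdorff I M := by
  constructor
  intro x hx
  have hmem : x ∈ (⨅ i : ℕ, I ^ i • ⊤ : Submodule R M) := by
    rw [Submodule.mem_iInf]
    intro n
    simpa [SModEq.zero] using hx n
  obtain ⟨r, hr⟩ := (Ideal.mem_iInf_smul_pow_eq_bot_iff I x).mp hmem
  have hjac : (r : R) ∈ (⊥ : Ideal R).jacobson :=
    IsAdicComplete.le_jacobson_bot I r.2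
  rw [Ideal.mem_jacobson_bot] at hjac
  have hu : IsUnit ((r : R) * (-1) + 1) := hjac (-1)
  have h0 : ((r : R) * (-1) + 1) • x = 0 := by
    simp [add_smul, mul_smul, hr]
  obtain ⟨u, hu'⟩ := hu
  calc x = (↑u⁻¹ * ↑u : R) • x := by simp
    _ = (↑u⁻¹ : R) • ((↑u : R) • x) := by rw [mul_smul]
    _ = 0 := by rw [hu', h0, smul_zero]

lemma aux_isAdicComplete_finite : IsAdicComplete I M := by
  have : IsHausdorff I M := aux_isHausdorff_finite I M
  have : IsPrecomplete I M := by
    constructor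
    intro f hf
    obtain ⟨L, hL⟩ := aux_of_surjective_finite I M
      (AdicCompletion.mk I M ⟨f, fun {m n} hmn => hf hmn⟩)
    refine ⟨L, fun n => ?_⟩
    have := congrArg (fun y => (AdicCompletion.incl I M y) n) hL
    simp only [AdicCompletion.incl_apply, AdicCompletion.of_apply,
      AdicCompletion.mk_apply_coe, Submodule.mkQ_apply] at this
    exact (SModEq.def).mpr this.symm
  constructor

end Aux

theorem hom_complete_bijective
    {R : Type u} [CommRing R] [IsNoetherianRing R] (I : Ideal R) [IsAdicComplete I R]
    {M N : Type u} [AddCommGroup M] [Module R M] [AddCommGroup N] [Module R N]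
    [Module.Finite R M] [Module.Finite R N]
    (F : ∀ n : ℕ, M →ₗ[R] N ⧸ (I ^ n • ⊤ : Submodule R N))
    (hF : ∀ n : ℕ,
      (Submodule.mapQ (I ^ (n + 1) • ⊤ : Submodule R N) (I ^ n • ⊤ : Submodule R N)
          LinearMap.id
          (by
            rw [Submodule.comap_id]
            exact Submodule.smul_mono_left (Ideal.pow_le_pow_right (Nat.le_succ n)))).comp
        (F (n + 1)) = F n) :
    ∃! f : M →ₗ[R] N,
      ∀ n : ℕ, (Submodule.mkQ (I ^ n • ⊤ : Submodule R N)).comp f = F n := by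
  haveI : IsAdicComplete I N := aux_isAdicComplete_finite I N
  -- successive compatibility in terms of `transitionMap`
  have hsucc : ∀ n : ℕ, AdicCompletion.transitionMap I N (Nat.le_succ n) ∘ₗ F (n + 1) = F n := by
    intro n
    have heq : AdicCompletion.transitionMap I N (Nat.le_succ n) =
        Submodule.mapQ (I ^ (n + 1) • ⊤ : Submodule R N) (I ^ n • ⊤ : Submodule R N)
          LinearMap.id
          (by
            rw [Submodule.comap_id]
            exact Submodule.smul_mono_left (Ideal.pow_le_pow_right (Nat.le_succ n))) := by
      apply Submodule.linearMap_qext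
      ext x
      rfl
    rw [heq]
    exact hF n
  have h' : ∀ {m n : ℕ} (hle : m ≤ n), AdicCompletion.transitionMap I N hle ∘ₗ F n = F m := by
    intro m n hle
    induction n, hle using Nat.le_induction with
    | base => rw [show AdicCompletion.transitionMap I N (le_refl m) = LinearMap.id by apply Submodule.linearMap_qext; ext x; rfl]; exact LinearMap.id_comp _
    | succ n hmn ih =>
        rw [← ih, ← hsucc n, ← LinearMap.comp_assoc]
        congr 1; apply Submodule.linearMap_qext; ext x; rfl
  set G : M →ₗ[R] AdicCompletion I N := AdicCompletion.lift I F h' with hG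
  have hinj : Function.Injective (AdicCompletion.of I N) := by
    intro x y hxy
    have h0 : AdicCompletion.of I N (x - y) = 0 := by rw [map_sub, hxy, sub_self]
    have : x - y = 0 := by
      apply (inferInstance : IsHausdorff I N).haus
      intro n
      have := congrArg (fun z => (AdicCompletion.incl I N z) n) h0
      simp only [AdicCompletion.incl_apply, AdicCompletion.of_apply,
        Submodule.mkQ_apply] at this
      rw [SModEq.zero]
      rwa [← Submodule.Quotient.mk_eq_zero]
    exact sub_eq_zero.mp this
  set e : N ≃ₗ[R] AdicCompletion I N :=
    LinearEquiv.ofBijective (AdicCompletion.of I N)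
      ⟨hinj, aux_of_surjective_finite I N⟩ with he
  refine ⟨e.symm.toLinearMap ∘ₗ G, fun n => ?_, fun g hg => ?_⟩
  · ext x
    have h1 : AdicCompletion.of I N (e.symm (G x)) = G x := by
      show e (e.symm (G x)) = G x
      exact e.apply_symm_apply (G x)
    have := congrArg (fun z => (AdicCompletion.incl I N z) n) h1
    simp only [AdicCompletion.incl_apply, AdicCompletion.of_apply,
      Submodule.mkQ_apply] at this
    simpa [hG] using this
  · ext x
    have h1 : AdicCompletion.of I N (g x) = G x := by
      ext n
      have := congrArg (fun φ : M →ₗ[R] N ⧸ (I ^ n • ⊤ : Submodule R N) => φ x) (hg n)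
      simpa [AdicCompletion.of_apply, hG] using this
    have : e (g x) = G x := h1
    have h2 : g x = e.symm (G x) := by
      rw [← this, e.symm_apply_apply]
    simpa using h2
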